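/- For every n ≥ 2 and every length function E on ℂⁿ, the space ℂⁿ is not of E-limit type: there exists a sequence of holomorphic maps F = {f_m} from the unit disc Δ to ℂⁿ that is not normal and not compactly divergent, and for which there do NOT exist sequences p_j ∈ Δ with p_j → p₀ ∈ Δ, indices selecting f_j ∈ F, and ρ_j > 0 with ρ_j → 0⁺ such that g_j(ξ) := f_j(p_j + ρ_j ξ) converges uniformly on every compact subset of ℂ to a non-constant E-Brody curve g : ℂ → ℂⁿ. -/

import Mathlib

open Filter Topology Metric

theorem exists_entire_fast_growth (M : ℕ → ℝ) :
    ∃ ψ : ℂ → ℂ, Differentiable ℂ ψ ∧ ∀ k : ℕ, M (k + 1) ≤ (ψ (k + 1 : ℕ)).re := by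
  classical
  set c : ℕ → ℝ := fun j => max (M (j + 1)) 1 with hc
  have hc1 : ∀ j, 1 ≤ c j := fun j => le_max_right _ _
  have hc0 : ∀ j, 0 ≤ c j := fun j => le_trans zero_le_one (hc1 j)
  set e : ℕ → ℕ := fun j => j + ⌈c j⌉₊ with he
  have hce : ∀ j, c j ≤ 2 ^ (⌈c j⌉₊) := by
    intro j
    calc c j ≤ (⌈c j⌉₊ : ℝ) := Nat.le_ceil _
    _ ≤ 2 ^ (⌈c j⌉₊ : ℕ) := by exact_mod_cast (Nat.lt_two_pow_self (n := ⌈c j⌉₊)).le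
  set F : ℕ → ℂ → ℂ := fun j z => (c j : ℂ) * (z / (j + 1)) ^ (e j) with hF
  have key : ∀ R : ℝ, 0 ≤ R → Summable (fun j => c j * (R / (j + 1)) ^ (e j)) := by
    intro R hR
    set u : ℕ → ℝ := fun j => c j * (R / (j + 1)) ^ (e j) with hu
    have hu0 : ∀ j, 0 ≤ u j := by
      intro j
      apply mul_nonneg (hc0 j)
      positivity
    rw [← summable_nat_add_iff ⌈2 * R⌉₊]
    apply Summable.of_nonneg_of_le (fun j => hu0 _) (g := fun j => u (j + ⌈2 * R⌉₊))
      (f := fun j => (1/2 : ℝ) ^ j)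
    · intro j
      have h2R : 2 * R ≤ ((j + ⌈2 * R⌉₊ : ℕ) : ℝ) :=
        le_trans (Nat.le_ceil _) (by exact_mod_cast Nat.le_add_left _ _)
      have hhalf : R / ((j + ⌈2 * R⌉₊ : ℕ) + 1) ≤ 1 / 2 := by
        rw [div_le_div_iff₀ (by positivity) (by norm_num)]
        linarith
      have h1 : u (j + ⌈2 * R⌉₊) ≤ c (j + ⌈2 * R⌉₊) * (1/2) ^ (e (j + ⌈2 * R⌉₊)) := by
        apply mul_le_mul_of_nonneg_left _ (hc0 _)
        exact pow_le_pow_left₀ (by positivity) hhalf _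
      refine le_trans h1 ?_
      set J := j + ⌈2 * R⌉₊ with hJ
      have hsplit : c J * (1/2 : ℝ) ^ (e J) = (c J * (1/2) ^ ⌈c J⌉₊) * (1/2) ^ J := by
        rw [he]; ring
      rw [hsplit]
      have hcl : c J * ((1/2 : ℝ) ^ ⌈c J⌉₊) ≤ 1 := by
        rw [one_div, inv_pow, mul_inv_le_iff₀ (by positivity)]
        simpa using hce J
      calc (c J * (1/2:ℝ) ^ ⌈c J⌉₊) * (1/2) ^ J
          ≤ 1 * (1/2:ℝ) ^ J := by
            apply mul_le_mul_of_nonneg_right hcl (by positivity)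
        _ = (1/2:ℝ) ^ J := one_mul _
        _ ≤ (1/2:ℝ) ^ j := by
            apply pow_le_pow_of_le_one (by norm_num) (by norm_num)
            omega
    · exact summable_geometric_of_lt_one (by norm_num) (by norm_num)
  have hbound : ∀ (R : ℝ) (j : ℕ) (w : ℂ), w ∈ ball (0:ℂ) R →
      ‖F j w‖ ≤ c j * (R / (j + 1)) ^ (e j) := by
    intro R j w hw
    simp only [hF, norm_mul, norm_pow, norm_div]
    have hwR : ‖w‖ ≤ R := le_of_lt (by simpa [dist_eq_norm] using hw)
    have hnc : ‖(c j : ℂ)‖ = c j := by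
      rw [Complex.norm_real, Real.norm_eq_abs, abs_of_nonneg (hc0 j)]
    rw [hnc]
    apply mul_le_mul_of_nonneg_left _ (hc0 j)
    apply pow_le_pow_left₀ (by positivity)
    have hj1 : ‖((j : ℂ) + 1)‖ = (j : ℝ) + 1 := by
      have : ((j : ℂ) + 1) = ((j + 1 : ℕ) : ℂ) := by push_cast; ring
      rw [this, Complex.norm_natCast]; push_cast; ring
    rw [hj1]
    exact div_le_div_of_nonneg_right hwR (by positivity)
  refine ⟨fun z => ∑' j, F j z, ?_, ?_⟩
  · intro z
    have hz : z ∈ ball (0:ℂ) (‖z‖ + 1) := by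
      simp only [mem_ball, dist_eq_norm, sub_zero]
      linarith [norm_nonneg z]
    have hR : (0:ℝ) ≤ ‖z‖ + 1 := by positivity
    have hdiff := Complex.differentiableOn_tsum_of_summable_norm (key (‖z‖+1) hR)
      (fun j => Differentiable.differentiableOn (by
        apply Differentiable.mul (differentiable_const _)
        exact Differentiable.pow (Differentiable.div_const differentiable_id _) _))
      isOpen_ball (fun j w hw => hbound (‖z‖+1) j w hw)
    exact (hdiff.differentiableAt (isOpen_ball.mem_nhds hz))
  · intro k
    have hterm : ∀ j, F j ((k + 1 : ℕ) : ℂ) = ((c j * (((k+1:ℕ) : ℝ) / (j+1)) ^ (e j) : ℝ) : ℂ) := by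
      intro j
      simp only [hF]
      push_cast
      ring
    have hsum : Summable (fun j => c j * (((k+1:ℕ):ℝ) / (j + 1)) ^ (e j)) := key _ (by positivity)
    have heq : (∑' j, F j ((k+1 : ℕ) : ℂ)) = ((∑' j, c j * (((k+1:ℕ):ℝ) / (j+1)) ^ (e j) : ℝ) : ℂ) := by
      rw [Complex.ofReal_tsum]
      exact tsum_congr hterm
    show M (k+1) ≤ (∑' j, F j ((k+1:ℕ) : ℂ)).re
    rw [heq, Complex.ofReal_re]
    have h1 : c k * (((k+1:ℕ):ℝ)/(k+1)) ^ (e k) ≤ ∑' j, c j * (((k+1:ℕ):ℝ)/(j+1)) ^ (e j) := by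
      apply Summable.le_tsum hsum
      intro j _
      apply mul_nonneg (hc0 j)
      positivity
    have h2 : (((k+1:ℕ):ℝ)/((k:ℝ)+1)) = 1 := by
      push_cast; field_simp
    rw [h2, one_pow, mul_one] at h1
    exact le_trans (le_max_left _ _) h1

/-- **`ℂⁿ` (n ≥ 2) is not of `E`-limit type for any length function `E`.**
There is a family `{f m}` of holomorphic maps from the unit disc to `ℂⁿ` which is
not normal and not compactly divergent, but for which no rescaled sequence
`ξ ↦ f (idx j) (p j + ρ j • ξ)` (with `p j → p₀` in the disc, `ρ j → 0⁺`)
converges uniformly on compact subsets of `ℂ` to a non-constant `E`-Brody curve. -/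
theorem stmt1 (n : ℕ) (hn : 2 ≤ n)
    (E : (Fin n → ℂ) → (Fin n → ℂ) → ℝ)
    (hEcont : Continuous fun p : (Fin n → ℂ) × (Fin n → ℂ) => E p.1 p.2)
    (hEnonneg : ∀ z v, 0 ≤ E z v)
    (hEzero : ∀ z v, E z v = 0 ↔ v = 0)
    (hEhom : ∀ (z : Fin n → ℂ) (a : ℂ) (v : Fin n → ℂ), E z (a • v) = ‖a‖ * E z v) :
    ∃ f : ℕ → ℂ → (Fin n → ℂ),
      -- each member is holomorphic on the unit disc
      (∀ m, DifferentiableOn ℂ (f m) (ball (0 : ℂ) 1)) ∧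
      -- the family is not normal
      (¬ ∀ s : ℕ → ℕ, ∃ (σ : ℕ → ℕ) (g : ℂ → (Fin n → ℂ)), StrictMono σ ∧
          DifferentiableOn ℂ g (ball (0 : ℂ) 1) ∧
          ∀ K ⊆ ball (0 : ℂ) 1, IsCompact K →
            TendstoUniformlyOn (fun j => f (s (σ j))) g atTop K) ∧
      -- the family is not compactly divergent (contains no compactly divergent sequence)
      (¬ ∃ s : ℕ → ℕ, ∀ K ⊆ ball (0 : ℂ) 1, IsCompact K →
          ∀ L : Set (Fin n → ℂ), IsCompact L →
            ∀ᶠ j in atTop, ∀ x ∈ K, f (s j) x ∉ L) ∧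
      -- but no rescaled sequence converges to a non-constant E-Brody curve
      ¬ ∃ (p : ℕ → ℂ) (p₀ : ℂ) (idx : ℕ → ℕ) (ρ : ℕ → ℝ) (g : ℂ → (Fin n → ℂ)),
          (∀ j, p j ∈ ball (0 : ℂ) 1) ∧ p₀ ∈ ball (0 : ℂ) 1 ∧
          Tendsto p atTop (𝓝 p₀) ∧
          (∀ j, 0 < ρ j) ∧ Tendsto ρ atTop (𝓝 0) ∧
          Differentiable ℂ g ∧
          (¬ ∃ c, ∀ ξ : ℂ, g ξ = c) ∧
          (∃ C : ℝ, ∀ ξ : ℂ, E (g ξ) (deriv g ξ) ≤ C) ∧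
          (∀ K : Set ℂ, IsCompact K →
            TendstoUniformlyOn (fun j ξ => f (idx j) (p j + (ρ j : ℂ) * ξ)) g atTop K) := by
  classical
  obtain ⟨m, rfl⟩ : ∃ m, n = m + 2 := ⟨n - 2, by omega⟩
  have h10 : (1 : Fin (m+2)) ≠ 0 := by simp [Fin.ext_iff]
  -- base points
  set zK : ℕ → (Fin (m+2) → ℂ) := fun K i => if i = 0 then (K : ℂ) else 0 with hzK
  -- threshold lemma
  have thresh : ∀ K : ℕ, ∃ Mt : ℝ, ∀ t : ℂ, Mt ≤ ‖t‖ →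
      (K : ℝ) ≤ E (zK K) (fun i => if i = 0 then 1 else if i = 1 then t else 0) := by
    intro K
    set v : ℂ → (Fin (m+2) → ℂ) := fun u i => if i = 0 then u else if i = 1 then 1 else 0 with hv
    have hv0 : v 0 ≠ 0 := by
      intro h
      have := congrFun h 1
      simp [hv, h10] at this
    have hδ : 0 < E (zK K) (v 0) :=
      lt_of_le_of_ne (hEnonneg _ _) (Ne.symm (fun h => hv0 ((hEzero _ _).mp h)))
    set δ := E (zK K) (v 0) with hδdef
    have hvc : Continuous v := by
      apply continuous_pi
      intro i
      by_cases h0 : i = 0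
      · simpa [hv, h0] using continuous_id'
      · by_cases h1 : i = 1 <;> simp [hv, h0, h1] <;> exact continuous_const
    have hcv : Continuous (fun u => E (zK K) (v u)) :=
      hEcont.comp (continuous_const.prodMk hvc)
    have hev : ∀ᶠ u in 𝓝 (0:ℂ), δ/2 < E (zK K) (v u) :=
      (hcv.tendsto 0).eventually (eventually_gt_nhds (by linarith))
    obtain ⟨ε, hε, hball⟩ := Metric.eventually_nhds_iff.mp hev
    refine ⟨1 + 2/ε + 2*K/δ, fun t ht => ?_⟩
    have habs : (1:ℝ) ≤ ‖t‖ := by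
      have h2ε : 0 ≤ 2/ε := by positivity
      have h2K : 0 ≤ 2*K/δ := by positivity
      linarith
    have ht0 : t ≠ 0 := by
      intro h; rw [h] at habs; simp at habs; linarith
    have hw : (fun i : Fin (m+2) => if i = 0 then 1 else if i = 1 then t else 0) = t • v t⁻¹ := by
      funext i
      by_cases h0 : i = 0
      · simp [hv, h0, Pi.smul_apply, smul_eq_mul, mul_inv_cancel₀ ht0]
      · by_cases h1 : i = 1 <;> simp [hv, h0, h1, Pi.smul_apply, smul_eq_mul]
    rw [hw, hEhom]
    have hdist : dist t⁻¹ 0 < ε := by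
      rw [dist_zero_right]
      have : ‖t⁻¹‖ = (‖t‖)⁻¹ := by
        rw [norm_inv]
      rw [this]
      rw [inv_lt_iff_one_lt_mul₀ (by linarith)]
      have h2 : 2/ε ≤ ‖t‖ := by
        have h2K : 0 ≤ 2*K/δ := by positivity
        linarith
      have : 2 ≤ ε * ‖t‖ := by
        rw [div_le_iff₀ hε] at h2
        linarith [mul_comm ε (‖t‖)]
      linarith
    have h1 := hball hdist
    have h2 : 2*K/δ ≤ ‖t‖ := by
      have h2ε : 0 ≤ 2/ε := by positivity
      linarith
    have hKδ : 2*(K:ℝ) ≤ ‖t‖ * δ := by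
      rw [div_le_iff₀ hδ] at h2
      linarith [mul_comm (‖t‖) δ]
    nlinarith [norm_nonneg t, mul_le_mul_of_nonneg_left (le_of_lt h1) (norm_nonneg t)]
  choose M' hM' using thresh
  obtain ⟨ψ, hψdiff, hψgrow⟩ := exists_entire_fast_growth M'
  set π : ℂ := (Real.pi : ℂ) with hπ
  set φ : ℂ → ℂ := fun z => Complex.sin (2 * π * z) * ψ z with hφ
  have hsd : ∀ z : ℂ, HasDerivAt (fun w => Complex.sin (2 * π * w)) (Complex.cos (2*π*z) * (2*π)) z := by
    intro z
    have h1 : HasDerivAt (fun w : ℂ => 2 * π * w) (2*π) z := by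
      simpa using (hasDerivAt_id z).const_mul (2*π)
    exact (Complex.hasDerivAt_sin (2*π*z)).comp z h1
  have hφd : ∀ z, HasDerivAt φ (Complex.cos (2*π*z) * (2*π) * ψ z + Complex.sin (2*π*z) * deriv ψ z) z :=
    fun z => (hsd z).mul (hψdiff z).hasDerivAt
  have hφdiff : Differentiable ℂ φ := fun z => (hφd z).differentiableAt
  have hsinK : ∀ K : ℕ, Complex.sin (2 * π * K) = 0 := by
    intro K
    have := Complex.sin_int_mul_pi (2 * K : ℤ)
    rw [← this]
    push_cast [hπ]
    ring_nf
  have hcosK : ∀ K : ℕ, Complex.cos (2 * π * K) = 1 := by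
    intro K
    have := Complex.cos_nat_mul_two_pi K
    rw [← this]
    push_cast [hπ]
    ring_nf
  have hφK : ∀ K : ℕ, φ (K : ℂ) = 0 := by
    intro K
    simp [hφ, hsinK K]
  have hφdK : ∀ K : ℕ, HasDerivAt φ (2*π*ψ K) (K : ℂ) := by
    intro K
    have := hφd (K : ℂ)
    rw [hsinK K, hcosK K] at this
    simpa using this
  set f : ℕ → ℂ → (Fin (m+2) → ℂ) :=
    fun M z i => if i = 0 then (M:ℂ) * z else if i = 1 then φ ((M:ℂ)*z) else 0 with hf
  have hf0 : ∀ M, f M 0 = 0 := by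
    intro M
    funext i
    by_cases h0 : i = 0
    · simp [hf, h0]
    · have hφ0 : φ 0 = 0 := by simpa using hφK 0
      by_cases h1 : i = 1 <;> simp [hf, h0, h1, hφ0]
  refine ⟨f, ?_, ?_, ?_, ?_⟩
  · -- holomorphic
    intro M
    apply Differentiable.differentiableOn
    rw [differentiable_pi]
    intro i
    by_cases h0 : i = 0
    · simpa [hf, h0] using (differentiable_id.const_mul (M:ℂ))
    · by_cases h1 : i = 1
      · simpa [hf, h0, h1, Function.comp_def] using hφdiff.comp (differentiable_id.const_mul (M:ℂ))
      · simpa [hf, h0, h1] using differentiable_const (0:ℂ)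
  · -- not normal
    intro hno
    obtain ⟨σ, g, hσ, hgd, hconv⟩ := hno id
    have hsub : ({(1/2 : ℂ)} : Set ℂ) ⊆ ball 0 1 := by
      intro x hx
      rw [Set.mem_singleton_iff] at hx
      subst hx
      simp only [mem_ball, dist_zero_right]
      rw [show ‖(1/2 : ℂ)‖ = 1/2 by simp]
      norm_num
    have hK := hconv {(1/2:ℂ)} hsub isCompact_singleton
    have h0 := hK.tendsto_at (Set.mem_singleton _)
    have h1 : Tendsto (fun j => f (σ j) (1/2) 0) atTop (𝓝 (g (1/2) 0)) :=
      ((continuous_apply (0 : Fin (m+2))).tendsto _).comp h0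
    simp only [hf, if_pos rfl] at h1
    have h2 : Tendsto (fun j => ‖(σ j : ℂ) * (1/2 : ℂ)‖) atTop (𝓝 ‖g (1/2) 0‖) :=
      (continuous_norm.tendsto _).comp h1
    have h3 : Tendsto (fun j => ‖(σ j : ℂ) * (1/2 : ℂ)‖) atTop atTop := by
      apply tendsto_atTop_mono (f := fun j : ℕ => (j:ℝ)/2)
      · intro j
        rw [norm_mul]
        rw [show ‖((σ j : ℕ) : ℂ)‖ = (σ j : ℝ) by simp [Complex.norm_natCast]]
        rw [show ‖(1/2 : ℂ)‖ = 1/2 by simp]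
        have : (j : ℝ) ≤ σ j := by exact_mod_cast hσ.le_apply
        linarith
      · exact tendsto_natCast_atTop_atTop.atTop_div_const (by norm_num)
    exact not_tendsto_atTop_of_tendsto_nhds h2 h3
  · -- not compactly divergent
    rintro ⟨s, hs⟩
    have hsub : ({(0:ℂ)} : Set ℂ) ⊆ ball 0 1 := by
      intro x hx
      rw [Set.mem_singleton_iff] at hx
      subst hx
      exact mem_ball_self one_pos
    obtain ⟨j, hj⟩ := (hs {0} hsub isCompact_singleton {0} isCompact_singleton).exists
    exact hj 0 (Set.mem_singleton _) (by rw [hf0]; exact Set.mem_singleton _)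
  · -- no Brody rescaling limit
    rintro ⟨p, p₀, idx, ρ, g, hp, hp₀, hpt, hρpos, hρ0, hgdiff, hgnc, ⟨C, hC⟩, hconv⟩
    have htu : ∀ ξ : ℂ, Tendsto (fun j => f (idx j) (p j + (ρ j:ℂ)*ξ)) atTop (𝓝 (g ξ)) :=
      fun ξ => (hconv {ξ} isCompact_singleton).tendsto_at (Set.mem_singleton _)
    have hcoord : ∀ (ξ : ℂ) (i : Fin (m+2)),
        Tendsto (fun j => f (idx j) (p j + (ρ j:ℂ)*ξ) i) atTop (𝓝 (g ξ i)) :=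
      fun ξ i => ((continuous_apply i).tendsto _).comp (htu ξ)
    have h0 : ∀ ξ : ℂ, Tendsto (fun j => (idx j : ℂ) * (p j + (ρ j:ℂ)*ξ)) atTop (𝓝 (g ξ 0)) := by
      intro ξ
      simpa [hf] using hcoord ξ 0
    have hb : Tendsto (fun j => (idx j : ℂ) * p j) atTop (𝓝 (g 0 0)) := by
      have := h0 0
      simpa using this
    set b : ℂ := g 0 0 with hbdef
    have hd : Tendsto (fun j => (idx j : ℂ) * (ρ j : ℂ)) atTop (𝓝 (g 1 0 - b)) :=
      Tendsto.congr (fun j => by ring) ((h0 1).sub hb)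
    set a : ℂ := g 1 0 - b with hadef
    have hinner : ∀ ξ : ℂ, Tendsto (fun j => (idx j : ℂ) * (p j + (ρ j:ℂ)*ξ)) atTop (𝓝 (b + a*ξ)) :=
      fun ξ => Tendsto.congr (fun j => by ring) (hb.add (hd.mul_const ξ))
    have hg0 : ∀ ξ : ℂ, g ξ 0 = b + a*ξ := fun ξ => tendsto_nhds_unique (h0 ξ) (hinner ξ)
    have h1c : ∀ ξ : ℂ, Tendsto (fun j => φ ((idx j : ℂ) * (p j + (ρ j:ℂ)*ξ))) atTop (𝓝 (g ξ 1)) := by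
      intro ξ
      simpa [hf, h10] using hcoord ξ 1
    have hg1 : ∀ ξ : ℂ, g ξ 1 = φ (b + a*ξ) :=
      fun ξ => tendsto_nhds_unique (h1c ξ) ((hφdiff.continuous.tendsto _).comp (hinner ξ))
    have hgi : ∀ (ξ : ℂ) (i : Fin (m+2)), i ≠ 0 → i ≠ 1 → g ξ i = 0 := by
      intro ξ i hi0 hi1
      have hc := hcoord ξ i
      simp only [hf, if_neg hi0, if_neg hi1] at hc
      exact tendsto_nhds_unique hc tendsto_const_nhds
    have ha : a ≠ 0 := by
      intro h
      apply hgnc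
      refine ⟨g 0, fun ξ => funext fun i => ?_⟩
      by_cases hi0 : i = 0
      · rw [hi0, hg0 ξ, hg0 0, h]; ring
      · by_cases hi1 : i = 1
        · rw [hi1, hg1 ξ, hg1 0, h]; ring_nf
        · rw [hgi ξ i hi0 hi1, hgi 0 i hi0 hi1]
    set V : ℂ → (Fin (m+2) → ℂ) :=
      fun ξ i => if i = 0 then a else if i = 1 then deriv φ (b + a*ξ) * a else 0 with hV
    have hasD : ∀ ξ : ℂ, HasDerivAt g (V ξ) ξ := by
      intro ξ
      rw [hasDerivAt_pi]
      intro i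
      by_cases hi0 : i = 0
      · subst hi0
        simp only [hg0, hV, if_pos rfl]
        simpa using ((hasDerivAt_id ξ).const_mul a).const_add b
      · by_cases hi1 : i = 1
        · subst hi1
          simp only [hg1, hV, if_neg hi0, if_pos rfl]
          have hin : HasDerivAt (fun ξ : ℂ => b + a*ξ) a ξ := by
            simpa using ((hasDerivAt_id ξ).const_mul a).const_add b
          have hcomp := HasDerivAt.comp ξ ((hφdiff (b+a*ξ)).hasDerivAt) hin
          simpa [Function.comp_def] using hcomp
        · simp only [hV, if_neg hi0, if_neg hi1]
          have : (fun ξ : ℂ => g ξ i) = fun _ => 0 := funext fun ξ => hgi ξ i hi0 hi1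
          rw [this]
          exact hasDerivAt_const _ _
    -- final contradiction
    have hA : 0 < ‖a‖ := norm_pos_iff.mpr ha
    obtain ⟨k, hk⟩ := exists_nat_gt (C / ‖a‖)
    set K : ℕ := k + 1 with hKdef
    set ξK : ℂ := ((K : ℂ) - b)/a with hξK
    have hbase : b + a * ξK = (K : ℂ) := by
      rw [hξK]
      field_simp
      ring
    have hgeq : g ξK = zK K := by
      funext i
      by_cases hi0 : i = 0
      · rw [hi0, hg0, hbase]; simp [hzK]
      · by_cases hi1 : i = 1
        · rw [hi1, hg1, hbase, hφK K]; simp [hzK, hi1, h10.symm]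
        · rw [hgi ξK i hi0 hi1]; simp [hzK, hi0]
    have hderφ : deriv φ (b + a * ξK) = 2*π*ψ K := by
      rw [hbase]
      exact (hφdK K).deriv
    set w : Fin (m+2) → ℂ := fun i => if i = 0 then 1 else if i = 1 then 2*π*ψ K else 0 with hwdef
    have hVsmul : V ξK = a • w := by
      funext i
      by_cases hi0 : i = 0
      · simp [hV, hwdef, hi0, Pi.smul_apply, smul_eq_mul]
      · by_cases hi1 : i = 1
        · simp only [hV, hwdef, hi0, hi1, if_neg h10, if_pos rfl, if_false, if_true,
            Pi.smul_apply, smul_eq_mul]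
          rw [hderφ]
          ring
        · simp [hV, hwdef, hi0, hi1, Pi.smul_apply, smul_eq_mul]
    have hder : deriv g ξK = a • w := by rw [(hasD ξK).deriv, hVsmul]
    have hEval := hC ξK
    rw [hgeq, hder, hEhom] at hEval
    -- lower bound from threshold
    have hgr := hψgrow k
    have habs2 : M' K ≤ ‖2*π*ψ K‖ := by
      have h1 : ‖2*π*ψ K‖ = 2 * Real.pi * ‖ψ K‖ := by
        rw [show (2*π*ψ (K:ℂ)) = ((2*Real.pi : ℝ) : ℂ) * ψ K by push_cast [hπ]; ring]
        rw [norm_mul, Complex.norm_real, Real.norm_eq_abs, abs_of_pos (by positivity)]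
      have h2 : (ψ (K:ℂ)).re ≤ ‖ψ K‖ := Complex.re_le_norm _
      have h3 : ‖ψ K‖ ≤ 2 * Real.pi * ‖ψ K‖ := by
        nlinarith [Real.pi_gt_three, norm_nonneg (ψ (K:ℂ))]
      rw [h1]
      calc M' K ≤ (ψ ((K:ℕ) : ℂ)).re := hgr
        _ ≤ ‖ψ K‖ := h2
        _ ≤ 2 * Real.pi * ‖ψ K‖ := h3
    have hlow : (K : ℝ) ≤ E (zK K) w := hM' K (2*π*ψ K) habs2
    have hfinal : ‖a‖ * (K : ℝ) ≤ C :=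
      le_trans (mul_le_mul_of_nonneg_left hlow (norm_nonneg a)) hEval
    have : C / ‖a‖ < (K : ℝ) := lt_of_lt_of_le hk (by exact_mod_cast Nat.le_succ k)
    rw [div_lt_iff₀ hA] at this
    linarith [mul_comm (‖a‖) ((K:ℕ) : ℝ)]
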